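/- For every a ∈ F_{2^n}^×, the points P⁺ = (a^{1/4}, a^{1/2}) and P⁻ = (a^{1/4}, a^{1/2} + a^{1/4}) lie on the elliptic curve E: y² + xy = x³ + a over F_{2^n} and have order exactly 4, with [2]P⁺ = [2]P⁻ = (0, a^{1/2}), the unique affine point of order 2. -/

import Mathlib

open WeierstrassCurve

/-- The curve `y² + xy = x³ + a` over a field. -/
def E2 {F : Type*} [Field F] (a : F) : WeierstrassCurve.Affine F :=
  { a₁ := 1, a₂ := 0, a₃ := 0, a₄ := 0, a₆ := a }

private lemma some_eq_some_aux {F : Type*} [Field F] {W : WeierstrassCurve.Affine F}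
    {x₁ x₂ y₁ y₂ : F} (hx : x₁ = x₂) (hy : y₁ = y₂) (h₁ : W.Nonsingular x₁ y₁)
    (h₂ : W.Nonsingular x₂ y₂) : Affine.Point.some _ _ h₁ = Affine.Point.some _ _ h₂ := by
  subst hx; subst hy; rfl

open Classical in
/-- For every `a ∈ 𝔽_{2^n}ˣ`, the points `P⁺ = (a^{1/4}, a^{1/2})` and
`P⁻ = (a^{1/4}, a^{1/2} + a^{1/4})` lie on `E : y² + xy = x³ + a` and have order exactly 4,
with `[2]P⁺ = [2]P⁻ = (0, a^{1/2})`, the unique affine point of order 2. -/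
theorem order_four_points (n : ℕ) (a r s : GaloisField 2 n) (ha : a ≠ 0)
    (hs : s ^ 2 = a) (hr : r ^ 2 = s) :
    (E2 a).Equation r s ∧ (E2 a).Equation r (s + r) ∧ (E2 a).Equation 0 s ∧
    ∃ (hplus : (E2 a).Nonsingular r s) (hminus : (E2 a).Nonsingular r (s + r))
      (h₂ : (E2 a).Nonsingular 0 s),
      addOrderOf (Affine.Point.some _ _ hplus) = 4 ∧
      addOrderOf (Affine.Point.some _ _ hminus) = 4 ∧
      2 • Affine.Point.some _ _ hplus = Affine.Point.some _ _ h₂ ∧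
      2 • Affine.Point.some _ _ hminus = Affine.Point.some _ _ h₂ ∧
      addOrderOf (Affine.Point.some _ _ h₂) = 2 ∧
      ∀ Q : (E2 a).Point, addOrderOf Q = 2 → Q = Affine.Point.some _ _ h₂ := by
  have h2 : (2 : GaloisField 2 n) = 0 := by
    exact_mod_cast CharP.cast_eq_zero (GaloisField 2 n) 2
  have hs0 : s ≠ 0 := fun h => ha (by rw [← hs, h]; ring)
  have hr0 : r ≠ 0 := fun h => hs0 (by rw [← hr, h]; ring)
  have heq1 : (E2 a).Equation r s := by
    rw [Affine.equation_iff]; show s ^ 2 + 1 * r * s + 0 * s = r ^ 3 + 0 * r ^ 2 + 0 * r + a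
    linear_combination hs - r * hr
  have heq2 : (E2 a).Equation r (s + r) := by
    rw [Affine.equation_iff]
    show (s + r) ^ 2 + 1 * r * (s + r) + 0 * (s + r) = r ^ 3 + 0 * r ^ 2 + 0 * r + a
    linear_combination hs - r * hr + (r * s + r ^ 2) * h2
  have heq3 : (E2 a).Equation 0 s := by
    rw [Affine.equation_iff]
    show s ^ 2 + 1 * 0 * s + 0 * s = 0 ^ 3 + 0 * 0 ^ 2 + 0 * 0 + a
    linear_combination hs
  have hplus : (E2 a).Nonsingular r s := by
    rw [Affine.nonsingular_iff']
    refine ⟨heq1, Or.inr ?_⟩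
    show 2 * s + 1 * r + 0 ≠ 0
    intro h
    exact hr0 (by linear_combination h - s * h2)
  have hminus : (E2 a).Nonsingular r (s + r) := by
    rw [Affine.nonsingular_iff']
    refine ⟨heq2, Or.inr ?_⟩
    show 2 * (s + r) + 1 * r + 0 ≠ 0
    intro h
    exact hr0 (by linear_combination h - (s + r) * h2)
  have h₂' : (E2 a).Nonsingular 0 s := by
    rw [Affine.nonsingular_iff']
    refine ⟨heq3, Or.inl ?_⟩
    show 1 * s - (3 * 0 ^ 2 + 2 * 0 * 0 + 0) ≠ 0
    intro h; apply hs0; linear_combination h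
  -- negY computations
  have hnegY_rs : (E2 a).negY r s = s + r := by
    show -s - 1 * r - 0 = s + r; linear_combination (-s - r) * h2
  have hnegY_rsr : (E2 a).negY r (s + r) = s := by
    show -(s + r) - 1 * r - 0 = s; linear_combination (-s - r) * h2
  have hnegY_0s : (E2 a).negY 0 s = s := by
    show -s - 1 * 0 - 0 = s; linear_combination (-s) * h2
  have hyne1 : s ≠ (E2 a).negY r s := by rw [hnegY_rs]; intro h; apply hr0; linear_combination -h
  have hyne2 : (s + r) ≠ (E2 a).negY r (s + r) := by
    rw [hnegY_rsr]; intro h; apply hr0; linear_combination h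
  -- slopes
  have hslope1 : (E2 a).slope r r s s = 0 := by
    rw [Affine.slope_of_Y_ne rfl hyne1, hnegY_rs]
    show (3 * r ^ 2 + 2 * 0 * r + 0 - 1 * s) / (s - (s + r)) = 0
    rw [div_eq_zero_iff]; left; linear_combination 3 * hr + s * h2
  have hslope2 : (E2 a).slope r r (s + r) (s + r) = 1 := by
    rw [Affine.slope_of_Y_ne rfl hyne2, hnegY_rsr]
    show (3 * r ^ 2 + 2 * 0 * r + 0 - 1 * (s + r)) / (s + r - s) = 1
    rw [div_eq_one_iff_eq (by simpa using hr0)]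
    linear_combination 3 * hr + (s - r) * h2
  -- double of P⁺
  have hdbl1 : 2 • Affine.Point.some _ _ hplus = Affine.Point.some _ _ h₂' := by
    rw [two_nsmul, Affine.Point.add_self_of_Y_ne hyne1]
    apply some_eq_some_aux
    · rw [hslope1]; show 0 ^ 2 + 1 * 0 - 0 - r - r = 0; linear_combination (-r) * h2
    · rw [hslope1]
      show (E2 a).negY _ (0 * ((E2 a).addX r r 0 - r) + s) = s
      show -(0 * ((E2 a).addX r r 0 - r) + s) - 1 * ((E2 a).addX r r 0) - 0 = s
      show -(0 * (0 ^ 2 + 1 * 0 - 0 - r - r - r) + s) - 1 * (0 ^ 2 + 1 * 0 - 0 - r - r) - 0 = s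
      linear_combination (r - s) * h2
  have hdbl2 : 2 • Affine.Point.some _ _ hminus = Affine.Point.some _ _ h₂' := by
    rw [two_nsmul, Affine.Point.add_self_of_Y_ne hyne2]
    apply some_eq_some_aux
    · rw [hslope2]; show 1 ^ 2 + 1 * 1 - 0 - r - r = 0; linear_combination (1 - r) * h2
    · rw [hslope2]
      show -(1 * (1 ^ 2 + 1 * 1 - 0 - r - r - r) + (s + r)) - 1 * (1 ^ 2 + 1 * 1 - 0 - r - r) - 0
        = s
      linear_combination (2 * r - s - 2) * h2
  have hdbl3 : 2 • Affine.Point.some _ _ h₂' = 0 := by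
    rw [two_nsmul, Affine.Point.add_self_of_Y_eq hnegY_0s.symm]
  have hord2 : addOrderOf (Affine.Point.some _ _ h₂') = 2 :=
    addOrderOf_eq_prime hdbl3 (Affine.Point.some_ne_zero h₂')
  have hord4 : ∀ (P : (E2 a).Point), 2 • P = Affine.Point.some _ _ h₂' → addOrderOf P = 4 := by
    intro P hP
    have : addOrderOf P = 2 ^ (1 + 1) := by
      apply addOrderOf_eq_prime_pow
      · rw [pow_one, hP]; exact Affine.Point.some_ne_zero h₂'
      · show 2 ^ 2 • P = 0
        rw [pow_two, mul_smul, hP, hdbl3]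
    simpa using this
  refine ⟨heq1, heq2, heq3, hplus, hminus, h₂', hord4 _ hdbl1, hord4 _ hdbl2, hdbl1, hdbl2,
    hord2, ?_⟩
  intro Q hQ
  have hQ2 : 2 • Q = 0 := by
    have := addOrderOf_nsmul_eq_zero Q
    rwa [hQ] at this
  have hQ0 : Q ≠ 0 := by
    intro h; rw [h] at hQ; simp at hQ
  rcases Q with _ | @⟨x, y, hxy⟩
  · exact absurd rfl hQ0
  · rw [two_nsmul] at hQ2
    by_cases hy : y = (E2 a).negY x y
    · -- y = negY x y forces x = 0 and y = s
      have hx0 : x = 0 := by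
        have h' : y = -y - 1 * x - 0 := hy
        linear_combination h' - y * h2
      subst hx0
      have hy' : y = s := by
        have heq : y ^ 2 + 1 * 0 * y + 0 * y = 0 ^ 3 + 0 * 0 ^ 2 + 0 * 0 + a := by
          have h := hxy.1
          rw [Affine.equation_iff] at h
          exact h
        have hsq : (y - s) ^ 2 = 0 := by linear_combination heq + hs + (a - y * s) * h2
        have := pow_eq_zero_iff (n := 2) (by norm_num) |>.mp hsq
        exact sub_eq_zero.mp this
      exact some_eq_some_aux rfl hy' hxy h₂'
    · rw [Affine.Point.add_self_of_Y_ne hy] at hQ2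
      exact absurd hQ2 (Affine.Point.some_ne_zero _)
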